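/- Let X ≥ 2, let B be an n×n matrix with integer entries in {0,…,X}, and let G_B be its weighted grid embedding. Form a graph H by adding a new vertex t and, for each 1 ≤ k ≤ n, an edge (b_k, t) of weight A_k, where A_1,…,A_n are integers in {0,…,X}. Then for every 1 ≤ j ≤ n, the shortest-path distance from a_j to t in H equals X²·(2n·(n−j+1) + 2j − 1) + B_{1,j} + A_1; that is, the dominant term is minimized at k = 1 and the shortest a_j–t path passes through b_1 regardless of the values of A and B. -/

import Mathlib

/-- Vertices of the grid embedding: `a j` (top terminals), `b i` (right terminals),
`u i j` (grid intersections), `v i j` (subdivision vertex above `u i j`),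
`w i j` (subdivision vertex to the right of `u i j`), `x i j` (shortcut vertices).
Indices are 1-based natural numbers; out-of-range vertices are isolated. -/
inductive GV : Type
  | a (j : ℕ)
  | b (i : ℕ)
  | u (i j : ℕ)
  | v (i j : ℕ)
  | w (i j : ℕ)
  | x (i j : ℕ)
deriving DecidableEq

/-- One-directional edge weights of the grid embedding of a boolean `R × C` matrix `M`;
`⊤` means "no edge". -/
def dirW (R C : ℕ) (M : ℕ → ℕ → Bool) : GV → GV → ℕ∞
  | GV.a j, GV.v i' j' =>
      if i' = 1 ∧ j' = j ∧ 1 ≤ j ∧ j ≤ C then ((2 * j - 1 : ℕ) : ℕ∞) else ⊤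
  | GV.v i j, GV.u i' j' =>
      if i' = i ∧ j' = j ∧ 1 ≤ i ∧ i ≤ R ∧ 1 ≤ j ∧ j ≤ C then 1 else ⊤
  | GV.u i j, GV.v i' j' =>
      if i' = i + 1 ∧ j' = j ∧ 1 ≤ i ∧ i + 1 ≤ R ∧ 1 ≤ j ∧ j ≤ C then
        ((2 * j - 1 : ℕ) : ℕ∞) else ⊤
  | GV.u i j, GV.w i' j' =>
      if i' = i ∧ j' = j ∧ 1 ≤ i ∧ i ≤ R ∧ 1 ≤ j ∧ j ≤ C then 2 else ⊤
  | GV.w i j, GV.u i' j' =>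
      if i' = i ∧ j' = j + 1 ∧ 1 ≤ i ∧ i ≤ R ∧ 1 ≤ j ∧ j + 1 ≤ C then
        ((2 * R - 2 : ℕ) : ℕ∞) else ⊤
  | GV.w i j, GV.b i' =>
      if i' = i ∧ j = C ∧ 1 ≤ i ∧ i ≤ R ∧ 1 ≤ C then ((2 * R - 2 : ℕ) : ℕ∞) else ⊤
  | GV.v i j, GV.x i' j' =>
      if i' = i ∧ j' = j ∧ M i j = true ∧ 1 ≤ i ∧ i ≤ R ∧ 1 ≤ j ∧ j ≤ C then 1 else ⊤
  | GV.x i j, GV.w i' j' =>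
      if i' = i ∧ j' = j ∧ M i j = true ∧ 1 ≤ i ∧ i ≤ R ∧ 1 ≤ j ∧ j ≤ C then 1 else ⊤
  | _, _ => ⊤

/-- Symmetrization of a one-directional weight function. -/
noncomputable def symW {V : Type} (f : V → V → ℕ∞) : V → V → ℕ∞ := fun p q => min (f p q) (f q p)

/-- Edge weights of the grid embedding of a boolean matrix `M`. -/
noncomputable def gridW (R C : ℕ) (M : ℕ → ℕ → Bool) : GV → GV → ℕ∞ := symW (dirW R C M)

/-- One-directional edge weights of the weighted grid embedding of an `R × C` matrix `M`
with entries in `{0, …, X}`: the grid embedding of the all-ones boolean matrix with every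
weight multiplied by `X²`, and the weight of each edge `(v i j, x i j)` increased by `M i j`. -/
def dirWt (R C X : ℕ) (M : ℕ → ℕ → ℕ) : GV → GV → ℕ∞ := fun p q =>
  (X : ℕ∞) ^ 2 * dirW R C (fun _ _ => true) p q +
    (match p, q with
      | GV.v i j, GV.x i' j' => if i' = i ∧ j' = j then (M i j : ℕ∞) else 0
      | _, _ => 0)

/-- Edge weights of the weighted grid embedding of `M`. -/
noncomputable def wgridW (R C X : ℕ) (M : ℕ → ℕ → ℕ) : GV → GV → ℕ∞ := symW (dirWt R C X M)

/-- Edge weights of the mirrored grid `G'`: the (weighted, scaled by `X²`) grid embedding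
with all shortcut vertices removed.  Mirroring is a weight-preserving graph isomorphism, so
the mirrored copy is represented by the same abstract graph. -/
noncomputable def mirW (R C X : ℕ) : GV → GV → ℕ∞ :=
  fun p q => (X : ℕ∞) ^ 2 * gridW R C (fun _ _ => false) p q

/-- Total weight of a walk, given as its list of visited vertices. -/
def cost {V : Type} (W : V → V → ℕ∞) : List V → ℕ∞
  | p :: q :: l => W p q + cost W (q :: l)
  | _ => 0

/-- Shortest-path distance: the least total weight of a walk from `s` to `t`
(`⊤` if there is none; walks through a non-edge have cost `⊤`). -/
noncomputable def gdist {V : Type} (W : V → V → ℕ∞) (s t : V) : ℕ∞ :=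
  sInf {c | ∃ l : List V, l.head? = some s ∧ l.getLast? = some t ∧ cost W l = c}

/-- The graph `H` of Statement 6: the weighted grid embedding of the `n × n` matrix `B`,
together with a new vertex `t` (encoded as `none`) and, for `1 ≤ k ≤ n`, an edge
`(b k, t)` of weight `A k`. -/
noncomputable def hW6 (n X : ℕ) (B : ℕ → ℕ → ℕ) (A : ℕ → ℕ) : Option GV → Option GV → ℕ∞
  | some p, some q => wgridW n n X B p q
  | some (GV.b k), none => if 1 ≤ k ∧ k ≤ n then (A k : ℕ∞) else ⊤
  | none, some (GV.b k) => if 1 ≤ k ∧ k ≤ n then (A k : ℕ∞) else ⊤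
  | _, _ => ⊤

section GridProof

def NN (n c : ℕ) : ℕ := 2*n*(n-c+1)

def psi1 (n : ℕ) : Option GV → ℕ
  | some (GV.a c) => 2*n*(n-c+1) + 2*c - 1
  | some (GV.b _) => 0
  | some (GV.u _ c) => 2*n*(n-c+1)
  | some (GV.v _ c) => 2*n*(n-c+1)
  | some (GV.w _ c) => 2*n*(n-c+1) - 2
  | some (GV.x _ c) => 2*n*(n-c+1) - 1
  | none => 0

def del1 (B : ℕ → ℕ → ℕ) (A : ℕ → ℕ) : Option GV → ℕ
  | some (GV.a c) => B 1 c + A 1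
  | some (GV.b i) => A i
  | some (GV.u i _) => A i
  | some (GV.v i c) => B i c + A i
  | some (GV.w i _) => A i
  | some (GV.x i _) => A i
  | none => 0

def psi2 (n : ℕ) : Option GV → ℕ
  | some (GV.a c) => 2*n*(n-c+1) + 4*c - 1
  | some (GV.b _) => 0
  | some (GV.u i c) => if i = 1 then 2*n*(n-c+1) + 2*c - 1 else 2*n*(n-c+1)
  | some (GV.v i c) => if i = 1 then 2*n*(n-c+1) + 2*c else 2*n*(n-c+1)
  | some (GV.w i c) => if i = 1 then 2*n*(n-c+1) + 2*c - 1 else 2*n*(n-c+1) - 2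
  | some (GV.x i c) => if i = 1 then 2*n*(n-c+1) + 2*c else 2*n*(n-c+1) - 1
  | none => 0

lemma keyIneq (s ω ψp ψq δp δq β : ℕ) (hδ : δp ≤ s)
    (h : ψp + 1 ≤ ω + ψq ∨ (ψp ≤ ω + ψq ∧ δp ≤ β + δq)) :
    s*ψp + δp ≤ s*ω + (β + (s*ψq + δq)) := by
  rcases h with h | ⟨h1, h2⟩
  · have h3 : s*(ψp+1) ≤ s*(ω+ψq) := Nat.mul_le_mul_left s h
    rw [Nat.mul_add, Nat.mul_add, Nat.mul_one] at h3
    omega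
  · have h3 : s*ψp ≤ s*(ω+ψq) := Nat.mul_le_mul_left s h1
    rw [Nat.mul_add] at h3
    omega

lemma key2 (s ω a b β : ℕ) (h : a ≤ ω + b) : s*a ≤ s*ω + (β + s*b) := by
  have h3 : s*a ≤ s*(ω+b) := Nat.mul_le_mul_left s h
  rw [Nat.mul_add] at h3
  omega

lemma castw (X w b : ℕ) : (X:ℕ∞)^2 * ((w:ℕ):ℕ∞) + ((b:ℕ):ℕ∞) = ((X^2*w + b : ℕ):ℕ∞) := by
  push_cast; ring

lemma cast1 (X b : ℕ) : (X:ℕ∞)^2 * (1:ℕ∞) + ((b:ℕ):ℕ∞) = ((X^2*1 + b : ℕ):ℕ∞) := by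
  push_cast; ring

lemma cast2 (X b : ℕ) : (X:ℕ∞)^2 * (2:ℕ∞) + ((b:ℕ):ℕ∞) = ((X^2*2 + b : ℕ):ℕ∞) := by
  push_cast; ring

lemma cast1B (X β b : ℕ) : (X:ℕ∞)^2 * (1:ℕ∞) + ((β:ℕ):ℕ∞) + ((b:ℕ):ℕ∞) = ((X^2*1 + (β + b) : ℕ):ℕ∞) := by
  push_cast; ring

lemma dir1 (n X : ℕ) (hn : 1 ≤ n) (hX : 2 ≤ X)
    (B : ℕ → ℕ → ℕ) (hB : ∀ i j, 1 ≤ i → i ≤ n → 1 ≤ j → j ≤ n → B i j ≤ X)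
    (A : ℕ → ℕ) (hA : ∀ k, 1 ≤ k → k ≤ n → A k ≤ X)
    (p q : GV) :
    ((X^2 * psi1 n (some p) + del1 B A (some p) : ℕ) : ℕ∞) ≤
        dirWt n n X B p q + ((X^2 * psi1 n (some q) + del1 B A (some q) : ℕ) : ℕ∞) ∧
      ((X^2 * psi1 n (some q) + del1 B A (some q) : ℕ) : ℕ∞) ≤
        dirWt n n X B p q + ((X^2 * psi1 n (some p) + del1 B A (some p) : ℕ) : ℕ∞) := by
  have htop : (X:ℕ∞)^2 * ⊤ = ⊤ := ENat.mul_top (by positivity)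
  have h2X : 2*X ≤ X^2 := by nlinarith
  cases p <;> cases q <;>
    (try (constructor <;> (simp only [dirWt, dirW]; simp [htop, top_add, le_top]; done)))
  case a.v c i' c' =>
    refine ⟨?_, ?_⟩ <;> simp only [dirWt, dirW, add_zero, psi1, del1] <;> split_ifs with h
    · obtain ⟨rfl, rfl, h1, h2⟩ := h
      have hδ : B 1 c' + A 1 ≤ X^2 := by
        have := hB 1 c' le_rfl hn h1 h2; have := hA 1 le_rfl hn; omega
      have hk := keyIneq (X^2) (2*c'-1) (2*n*(n-c'+1)+2*c'-1) (2*n*(n-c'+1))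
        (B 1 c' + A 1) (B 1 c' + A 1) 0 hδ (Or.inr ⟨by omega, by omega⟩)
      rw [castw]; exact Nat.cast_le.mpr (by omega)
    · simp [htop, top_add, le_top]
    · obtain ⟨rfl, rfl, h1, h2⟩ := h
      have hδ : B 1 c' + A 1 ≤ X^2 := by
        have := hB 1 c' le_rfl hn h1 h2; have := hA 1 le_rfl hn; omega
      have hk := keyIneq (X^2) (2*c'-1) (2*n*(n-c'+1)) (2*n*(n-c'+1)+2*c'-1)
        (B 1 c' + A 1) (B 1 c' + A 1) 0 hδ (Or.inl (by omega))
      rw [castw]; exact Nat.cast_le.mpr (by omega)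
    · simp [htop, top_add, le_top]
  case v.u i c i' c' =>
    refine ⟨?_, ?_⟩ <;> simp only [dirWt, dirW, add_zero, psi1, del1] <;> split_ifs with h
    · obtain ⟨rfl, rfl, h1, h2, h3, h4⟩ := h
      have hδ : B i' c' + A i' ≤ X^2 := by
        have := hB i' c' h1 h2 h3 h4; have := hA i' h1 h2; omega
      have hk := keyIneq (X^2) 1 (2*n*(n-c'+1)) (2*n*(n-c'+1))
        (B i' c' + A i') (A i') 0 hδ (Or.inl (by omega))
      rw [cast1]; exact Nat.cast_le.mpr (by omega)
    · simp [htop, top_add, le_top]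
    · obtain ⟨rfl, rfl, h1, h2, h3, h4⟩ := h
      have hδ : A i' ≤ X^2 := by have := hA i' h1 h2; omega
      have hk := keyIneq (X^2) 1 (2*n*(n-c'+1)) (2*n*(n-c'+1))
        (A i') (B i' c' + A i') 0 hδ (Or.inl (by omega))
      rw [cast1]; exact Nat.cast_le.mpr (by omega)
    · simp [htop, top_add, le_top]
  case u.v i c i' c' =>
    refine ⟨?_, ?_⟩ <;> simp only [dirWt, dirW, add_zero, psi1, del1] <;> split_ifs with h
    · obtain ⟨rfl, rfl, h1, h2, h3, h4⟩ := h
      have hδ : A i ≤ X^2 := by have := hA i h1 (by omega); omega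
      have hk := keyIneq (X^2) (2*c'-1) (2*n*(n-c'+1)) (2*n*(n-c'+1))
        (A i) (B (i+1) c' + A (i+1)) 0 hδ (Or.inl (by omega))
      rw [castw]; exact Nat.cast_le.mpr (by omega)
    · simp [htop, top_add, le_top]
    · obtain ⟨rfl, rfl, h1, h2, h3, h4⟩ := h
      have hδ : B (i+1) c' + A (i+1) ≤ X^2 := by
        have := hB (i+1) c' (by omega) h2 h3 h4; have := hA (i+1) (by omega) h2; omega
      have hk := keyIneq (X^2) (2*c'-1) (2*n*(n-c'+1)) (2*n*(n-c'+1))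
        (B (i+1) c' + A (i+1)) (A i) 0 hδ (Or.inl (by omega))
      rw [castw]; exact Nat.cast_le.mpr (by omega)
    · simp [htop, top_add, le_top]
  case u.w i c i' c' =>
    refine ⟨?_, ?_⟩ <;> simp only [dirWt, dirW, add_zero, psi1, del1] <;> split_ifs with h
    · obtain ⟨rfl, rfl, h1, h2, h3, h4⟩ := h
      have hδ : A i' ≤ X^2 := by have := hA i' h1 h2; omega
      have hNN : 2*n ≤ 2*n*(n-c'+1) := Nat.le_mul_of_pos_right _ (by omega)
      have hk := keyIneq (X^2) 2 (2*n*(n-c'+1)) (2*n*(n-c'+1)-2)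
        (A i') (A i') 0 hδ (Or.inr ⟨by omega, by omega⟩)
      rw [cast2]; exact Nat.cast_le.mpr (by omega)
    · simp [htop, top_add, le_top]
    · obtain ⟨rfl, rfl, h1, h2, h3, h4⟩ := h
      have hδ : A i' ≤ X^2 := by have := hA i' h1 h2; omega
      have hk := keyIneq (X^2) 2 (2*n*(n-c'+1)-2) (2*n*(n-c'+1))
        (A i') (A i') 0 hδ (Or.inl (by omega))
      rw [cast2]; exact Nat.cast_le.mpr (by omega)
    · simp [htop, top_add, le_top]
  case w.u i c i' c' =>
    refine ⟨?_, ?_⟩ <;> simp only [dirWt, dirW, add_zero, psi1, del1] <;> split_ifs with h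
    · obtain ⟨rfl, rfl, h1, h2, h3, h4⟩ := h
      have hδ : A i' ≤ X^2 := by have := hA i' h1 h2; omega
      have hrel : 2*n*(n-c+1) = 2*n*(n-(c+1)+1) + 2*n := by
        have hh : n - c + 1 = (n - (c+1) + 1) + 1 := by omega
        rw [hh, Nat.mul_succ]
      have hk := keyIneq (X^2) (2*n-2) (2*n*(n-c+1)-2) (2*n*(n-(c+1)+1))
        (A i') (A i') 0 hδ (Or.inr ⟨by omega, by omega⟩)
      rw [castw]; exact Nat.cast_le.mpr (by omega)
    · simp [htop, top_add, le_top]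
    · obtain ⟨rfl, rfl, h1, h2, h3, h4⟩ := h
      have hδ : A i' ≤ X^2 := by have := hA i' h1 h2; omega
      have hrel : 2*n*(n-c+1) = 2*n*(n-(c+1)+1) + 2*n := by
        have hh : n - c + 1 = (n - (c+1) + 1) + 1 := by omega
        rw [hh, Nat.mul_succ]
      have hk := keyIneq (X^2) (2*n-2) (2*n*(n-(c+1)+1)) (2*n*(n-c+1)-2)
        (A i') (A i') 0 hδ (Or.inl (by omega))
      rw [castw]; exact Nat.cast_le.mpr (by omega)
    · simp [htop, top_add, le_top]
  case w.b i c i' =>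
    refine ⟨?_, ?_⟩ <;> simp only [dirWt, dirW, add_zero, psi1, del1] <;> split_ifs with h
    · obtain ⟨rfl, hcn, h1, h2, h3⟩ := h
      have hδ : A i' ≤ X^2 := by have := hA i' h1 h2; omega
      have hNn : 2*n*(n-c+1) = 2*n := by
        rw [hcn, show n-n+1 = 1 by omega, Nat.mul_one]
      have hk := keyIneq (X^2) (2*n-2) (2*n*(n-c+1)-2) 0
        (A i') (A i') 0 hδ (Or.inr ⟨by omega, by omega⟩)
      rw [castw]; exact Nat.cast_le.mpr (by omega)
    · simp [htop, top_add, le_top]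
    · obtain ⟨rfl, hcn, h1, h2, h3⟩ := h
      have hδ : A i' ≤ X^2 := by have := hA i' h1 h2; omega
      have hNn : 2*n*(n-c+1) = 2*n := by
        rw [hcn, show n-n+1 = 1 by omega, Nat.mul_one]
      have hk := keyIneq (X^2) (2*n-2) 0 (2*n*(n-c+1)-2)
        (A i') (A i') 0 hδ (Or.inr ⟨by omega, by omega⟩)
      rw [castw]; exact Nat.cast_le.mpr (by omega)
    · simp [htop, top_add, le_top]
  case v.x i c i' c' =>
    refine ⟨?_, ?_⟩ <;> simp only [dirWt, dirW, psi1, del1] <;>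
      [skip; skip] <;>
      by_cases hg : i' = i ∧ c' = c ∧ True ∧ 1 ≤ i ∧ i ≤ n ∧ 1 ≤ c ∧ c ≤ n
    · rw [if_pos hg, if_pos (show i' = i ∧ c' = c from ⟨hg.1, hg.2.1⟩)]
      obtain ⟨rfl, rfl, -, h1, h3, h4, h5⟩ := hg
      have hδ : B i' c' + A i' ≤ X^2 := by
        have := hB i' c' h1 h3 h4 h5; have := hA i' h1 h3; omega
      have hNN : 2*n ≤ 2*n*(n-c'+1) := Nat.le_mul_of_pos_right _ (by omega)
      have hk := keyIneq (X^2) 1 (2*n*(n-c'+1)) (2*n*(n-c'+1)-1)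
        (B i' c' + A i') (A i') (B i' c') hδ (Or.inr ⟨by omega, by omega⟩)
      rw [cast1B]; exact Nat.cast_le.mpr (by omega)
    · rw [if_neg hg]; simp [htop, top_add, le_top]
    · rw [if_pos hg, if_pos (show i' = i ∧ c' = c from ⟨hg.1, hg.2.1⟩)]
      obtain ⟨rfl, rfl, -, h1, h3, h4, h5⟩ := hg
      have hδ : A i' ≤ X^2 := by have := hA i' h1 h3; omega
      have hk := keyIneq (X^2) 1 (2*n*(n-c'+1)-1) (2*n*(n-c'+1))
        (A i') (B i' c' + A i') (B i' c') hδ (Or.inl (by omega))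
      rw [cast1B]; exact Nat.cast_le.mpr (by omega)
    · rw [if_neg hg]; simp [htop, top_add, le_top]
  case x.w i c i' c' =>
    refine ⟨?_, ?_⟩ <;> simp only [dirWt, dirW, add_zero, psi1, del1] <;> split_ifs with h
    · obtain ⟨rfl, rfl, -, h1, h2, h3, h4⟩ := h
      have hδ : A i' ≤ X^2 := by have := hA i' h1 h2; omega
      have hk := keyIneq (X^2) 1 (2*n*(n-c'+1)-1) (2*n*(n-c'+1)-2)
        (A i') (A i') 0 hδ (Or.inr ⟨by omega, by omega⟩)
      rw [cast1]; exact Nat.cast_le.mpr (by omega)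
    · simp [htop, top_add, le_top]
    · obtain ⟨rfl, rfl, -, h1, h2, h3, h4⟩ := h
      have hδ : A i' ≤ X^2 := by have := hA i' h1 h2; omega
      have hk := keyIneq (X^2) 1 (2*n*(n-c'+1)-2) (2*n*(n-c'+1)-1)
        (A i') (A i') 0 hδ (Or.inr ⟨by omega, by omega⟩)
      rw [cast1]; exact Nat.cast_le.mpr (by omega)
    · simp [htop, top_add, le_top]

lemma dir2 (n X : ℕ) (hn : 1 ≤ n) (hX : 2 ≤ X)
    (B : ℕ → ℕ → ℕ) (p q : GV) (hq : p ≠ GV.b 1 → q ≠ GV.b 1) :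
    ((X^2 * psi2 n (some p) : ℕ) : ℕ∞) ≤
        dirWt n n X B p q + ((X^2 * psi2 n (some q) : ℕ) : ℕ∞) ∧
      ((X^2 * psi2 n (some q) : ℕ) : ℕ∞) ≤
        dirWt n n X B p q + ((X^2 * psi2 n (some p) : ℕ) : ℕ∞) := by
  have htop : (X:ℕ∞)^2 * ⊤ = ⊤ := ENat.mul_top (by positivity)
  cases p <;> cases q <;>
    (try (constructor <;> (simp only [dirWt, dirW]; simp [htop, top_add, le_top]; done)))
  case a.v c i' c' =>
    refine ⟨?_, ?_⟩ <;> simp only [dirWt, dirW, add_zero] <;> split_ifs with h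
    · obtain ⟨rfl, rfl, h1, h2⟩ := h
      simp only [psi2, eq_self_iff_true, if_true]
      have hk := key2 (X^2) (2*c'-1) (2*n*(n-c'+1)+4*c'-1) (2*n*(n-c'+1)+2*c') 0 (by omega)
      rw [castw]; exact Nat.cast_le.mpr (by omega)
    · simp [htop, top_add, le_top]
    · obtain ⟨rfl, rfl, h1, h2⟩ := h
      simp only [psi2, eq_self_iff_true, if_true]
      have hk := key2 (X^2) (2*c'-1) (2*n*(n-c'+1)+2*c') (2*n*(n-c'+1)+4*c'-1) 0 (by omega)
      rw [castw]; exact Nat.cast_le.mpr (by omega)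
    · simp [htop, top_add, le_top]
  case v.u i c i' c' =>
    refine ⟨?_, ?_⟩ <;> simp only [dirWt, dirW, add_zero] <;> split_ifs with h
    · obtain ⟨rfl, rfl, h1, h2, h3, h4⟩ := h
      by_cases hi : i' = 1
      · simp only [psi2, if_pos hi]
        have hk := key2 (X^2) 1 (2*n*(n-c'+1)+2*c') (2*n*(n-c'+1)+2*c'-1) 0 (by omega)
        rw [cast1]; exact Nat.cast_le.mpr (by omega)
      · simp only [psi2, if_neg hi]
        have hk := key2 (X^2) 1 (2*n*(n-c'+1)) (2*n*(n-c'+1)) 0 (by omega)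
        rw [cast1]; exact Nat.cast_le.mpr (by omega)
    · simp [htop, top_add, le_top]
    · obtain ⟨rfl, rfl, h1, h2, h3, h4⟩ := h
      by_cases hi : i' = 1
      · simp only [psi2, if_pos hi]
        have hk := key2 (X^2) 1 (2*n*(n-c'+1)+2*c'-1) (2*n*(n-c'+1)+2*c') 0 (by omega)
        rw [cast1]; exact Nat.cast_le.mpr (by omega)
      · simp only [psi2, if_neg hi]
        have hk := key2 (X^2) 1 (2*n*(n-c'+1)) (2*n*(n-c'+1)) 0 (by omega)
        rw [cast1]; exact Nat.cast_le.mpr (by omega)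
    · simp [htop, top_add, le_top]
  case u.v i c i' c' =>
    refine ⟨?_, ?_⟩ <;> simp only [dirWt, dirW, add_zero] <;> split_ifs with h
    · obtain ⟨rfl, rfl, h1, h2, h3, h4⟩ := h
      by_cases hi : i = 1
      · simp only [psi2, if_pos hi, if_neg (show ¬(i+1 = 1) by omega)]
        have hk := key2 (X^2) (2*c'-1) (2*n*(n-c'+1)+2*c'-1) (2*n*(n-c'+1)) 0 (by omega)
        rw [castw]; exact Nat.cast_le.mpr (by omega)
      · simp only [psi2, if_neg hi, if_neg (show ¬(i+1 = 1) by omega)]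
        have hk := key2 (X^2) (2*c'-1) (2*n*(n-c'+1)) (2*n*(n-c'+1)) 0 (by omega)
        rw [castw]; exact Nat.cast_le.mpr (by omega)
    · simp [htop, top_add, le_top]
    · obtain ⟨rfl, rfl, h1, h2, h3, h4⟩ := h
      by_cases hi : i = 1
      · simp only [psi2, if_pos hi, if_neg (show ¬(i+1 = 1) by omega)]
        have hk := key2 (X^2) (2*c'-1) (2*n*(n-c'+1)) (2*n*(n-c'+1)+2*c'-1) 0 (by omega)
        rw [castw]; exact Nat.cast_le.mpr (by omega)
      · simp only [psi2, if_neg hi, if_neg (show ¬(i+1 = 1) by omega)]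
        have hk := key2 (X^2) (2*c'-1) (2*n*(n-c'+1)) (2*n*(n-c'+1)) 0 (by omega)
        rw [castw]; exact Nat.cast_le.mpr (by omega)
    · simp [htop, top_add, le_top]
  case u.w i c i' c' =>
    refine ⟨?_, ?_⟩ <;> simp only [dirWt, dirW, add_zero] <;> split_ifs with h
    · obtain ⟨rfl, rfl, h1, h2, h3, h4⟩ := h
      by_cases hi : i' = 1
      · simp only [psi2, if_pos hi]
        have hk := key2 (X^2) 2 (2*n*(n-c'+1)+2*c'-1) (2*n*(n-c'+1)+2*c'-1) 0 (by omega)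
        rw [cast2]; exact Nat.cast_le.mpr (by omega)
      · simp only [psi2, if_neg hi]
        have hNN : 2*n ≤ 2*n*(n-c'+1) := Nat.le_mul_of_pos_right _ (by omega)
        have hk := key2 (X^2) 2 (2*n*(n-c'+1)) (2*n*(n-c'+1)-2) 0 (by omega)
        rw [cast2]; exact Nat.cast_le.mpr (by omega)
    · simp [htop, top_add, le_top]
    · obtain ⟨rfl, rfl, h1, h2, h3, h4⟩ := h
      by_cases hi : i' = 1
      · simp only [psi2, if_pos hi]
        have hk := key2 (X^2) 2 (2*n*(n-c'+1)+2*c'-1) (2*n*(n-c'+1)+2*c'-1) 0 (by omega)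
        rw [cast2]; exact Nat.cast_le.mpr (by omega)
      · simp only [psi2, if_neg hi]
        have hk := key2 (X^2) 2 (2*n*(n-c'+1)-2) (2*n*(n-c'+1)) 0 (by omega)
        rw [cast2]; exact Nat.cast_le.mpr (by omega)
    · simp [htop, top_add, le_top]
  case w.u i c i' c' =>
    refine ⟨?_, ?_⟩ <;> simp only [dirWt, dirW, add_zero] <;> split_ifs with h
    · obtain ⟨rfl, rfl, h1, h2, h3, h4⟩ := h
      have hrel : 2*n*(n-c+1) = 2*n*(n-(c+1)+1) + 2*n := by
        have hh : n - c + 1 = (n - (c+1) + 1) + 1 := by omega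
        rw [hh, Nat.mul_succ]
      by_cases hi : i' = 1
      · simp only [psi2, if_pos hi]
        have hk := key2 (X^2) (2*n-2) (2*n*(n-c+1)+2*c-1) (2*n*(n-(c+1)+1)+2*(c+1)-1) 0 (by omega)
        rw [castw]; exact Nat.cast_le.mpr (by omega)
      · simp only [psi2, if_neg hi]
        have hk := key2 (X^2) (2*n-2) (2*n*(n-c+1)-2) (2*n*(n-(c+1)+1)) 0 (by omega)
        rw [castw]; exact Nat.cast_le.mpr (by omega)
    · simp [htop, top_add, le_top]
    · obtain ⟨rfl, rfl, h1, h2, h3, h4⟩ := h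
      have hrel : 2*n*(n-c+1) = 2*n*(n-(c+1)+1) + 2*n := by
        have hh : n - c + 1 = (n - (c+1) + 1) + 1 := by omega
        rw [hh, Nat.mul_succ]
      by_cases hi : i' = 1
      · simp only [psi2, if_pos hi]
        have hk := key2 (X^2) (2*n-2) (2*n*(n-(c+1)+1)+2*(c+1)-1) (2*n*(n-c+1)+2*c-1) 0 (by omega)
        rw [castw]; exact Nat.cast_le.mpr (by omega)
      · simp only [psi2, if_neg hi]
        have hk := key2 (X^2) (2*n-2) (2*n*(n-(c+1)+1)) (2*n*(n-c+1)-2) 0 (by omega)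
        rw [castw]; exact Nat.cast_le.mpr (by omega)
    · simp [htop, top_add, le_top]
  case w.b i c i' =>
    have hne : i' ≠ 1 ∨ GV.w i c = GV.b 1 := by
      by_cases hw : GV.b i' = GV.b 1
      · right; by_contra hp; exact (hq hp) hw
      · left; intro h1; exact hw (by rw [h1])
    rcases hne with hne | hne
    swap
    · exact absurd hne (by simp)
    refine ⟨?_, ?_⟩ <;> simp only [dirWt, dirW, add_zero] <;> split_ifs with h
    · obtain ⟨rfl, hcn, h1, h2, h3⟩ := h
      have hNn : 2*n*(n-c+1) = 2*n := by
        rw [hcn, show n-n+1 = 1 by omega, Nat.mul_one]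
      simp only [psi2, if_neg hne]
      have hk := key2 (X^2) (2*n-2) (2*n*(n-c+1)-2) 0 0 (by omega)
      rw [castw]; exact Nat.cast_le.mpr (by omega)
    · simp [htop, top_add, le_top]
    · obtain ⟨rfl, hcn, h1, h2, h3⟩ := h
      simp only [psi2, if_neg hne]
      have hk := key2 (X^2) (2*n-2) 0 (2*n*(n-c+1)-2) 0 (by omega)
      rw [castw]; exact Nat.cast_le.mpr (by omega)
    · simp [htop, top_add, le_top]
  case v.x i c i' c' =>
    refine ⟨?_, ?_⟩ <;> simp only [dirWt, dirW] <;>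
      [skip; skip] <;>
      by_cases hg : i' = i ∧ c' = c ∧ True ∧ 1 ≤ i ∧ i ≤ n ∧ 1 ≤ c ∧ c ≤ n
    · rw [if_pos hg, if_pos (show i' = i ∧ c' = c from ⟨hg.1, hg.2.1⟩)]
      obtain ⟨rfl, rfl, -, h1, h3, h4, h5⟩ := hg
      by_cases hi : i' = 1
      · simp only [psi2, if_pos hi]
        have hk := key2 (X^2) 1 (2*n*(n-c'+1)+2*c') (2*n*(n-c'+1)+2*c') (B i' c') (by omega)
        rw [cast1B]; exact Nat.cast_le.mpr (by omega)
      · simp only [psi2, if_neg hi]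
        have hNN : 2*n ≤ 2*n*(n-c'+1) := Nat.le_mul_of_pos_right _ (by omega)
        have hk := key2 (X^2) 1 (2*n*(n-c'+1)) (2*n*(n-c'+1)-1) (B i' c') (by omega)
        rw [cast1B]; exact Nat.cast_le.mpr (by omega)
    · rw [if_neg hg]; simp [htop, top_add, le_top]
    · rw [if_pos hg, if_pos (show i' = i ∧ c' = c from ⟨hg.1, hg.2.1⟩)]
      obtain ⟨rfl, rfl, -, h1, h3, h4, h5⟩ := hg
      by_cases hi : i' = 1
      · simp only [psi2, if_pos hi]
        have hk := key2 (X^2) 1 (2*n*(n-c'+1)+2*c') (2*n*(n-c'+1)+2*c') (B i' c') (by omega)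
        rw [cast1B]; exact Nat.cast_le.mpr (by omega)
      · simp only [psi2, if_neg hi]
        have hk := key2 (X^2) 1 (2*n*(n-c'+1)-1) (2*n*(n-c'+1)) (B i' c') (by omega)
        rw [cast1B]; exact Nat.cast_le.mpr (by omega)
    · rw [if_neg hg]; simp [htop, top_add, le_top]
  case x.w i c i' c' =>
    refine ⟨?_, ?_⟩ <;> simp only [dirWt, dirW, add_zero] <;> split_ifs with h
    · obtain ⟨rfl, rfl, -, h1, h2, h3, h4⟩ := h
      by_cases hi : i' = 1
      · simp only [psi2, if_pos hi]
        have hk := key2 (X^2) 1 (2*n*(n-c'+1)+2*c') (2*n*(n-c'+1)+2*c'-1) 0 (by omega)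
        rw [cast1]; exact Nat.cast_le.mpr (by omega)
      · simp only [psi2, if_neg hi]
        have hk := key2 (X^2) 1 (2*n*(n-c'+1)-1) (2*n*(n-c'+1)-2) 0 (by omega)
        rw [cast1]; exact Nat.cast_le.mpr (by omega)
    · simp [htop, top_add, le_top]
    · obtain ⟨rfl, rfl, -, h1, h2, h3, h4⟩ := h
      by_cases hi : i' = 1
      · simp only [psi2, if_pos hi]
        have hk := key2 (X^2) 1 (2*n*(n-c'+1)+2*c'-1) (2*n*(n-c'+1)+2*c') 0 (by omega)
        rw [cast1]; exact Nat.cast_le.mpr (by omega)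
      · simp only [psi2, if_neg hi]
        have hk := key2 (X^2) 1 (2*n*(n-c'+1)-2) (2*n*(n-c'+1)-1) 0 (by omega)
        rw [cast1]; exact Nat.cast_le.mpr (by omega)
    · simp [htop, top_add, le_top]

lemma phi_le_cost {V : Type} (W : V → V → ℕ∞) (φ : V → ℕ)
    (hφ : ∀ p q, (φ p : ℕ∞) ≤ W p q + φ q) :
    ∀ (l : List V) (p t : V), l.head? = some p → l.getLast? = some t →
      (φ p : ℕ∞) ≤ cost W l + φ t := by
  intro l
  induction l with
  | nil => intro p t hp _; simp at hp
  | cons a l ih =>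
    intro p t hp ht
    cases l with
    | nil =>
      have hp' : a = p := by simpa using hp
      have ht' : a = t := by simpa using ht
      subst hp'; subst ht'
      simp [cost]
    | cons b l' =>
      have hp' : a = p := by simpa using hp
      subst hp'
      have h2 : (φ b : ℕ∞) ≤ cost W (b :: l') + φ t :=
        ih b t rfl (by simpa using ht)
      calc (φ a : ℕ∞) ≤ W a b + φ b := hφ a b
        _ ≤ W a b + (cost W (b :: l') + φ t) := add_le_add le_rfl h2
        _ = cost W (a :: b :: l') + φ t := by
            show _ = W a b + cost W (b :: l') + _
            rw [add_assoc]

lemma cost_eqW {V : Type} (W W' : V → V → ℕ∞) :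
    ∀ l : List V, (∀ p q, p ∈ l → q ∈ l → W p q = W' p q) → cost W l = cost W' l := by
  intro l
  induction l with
  | nil => intro _; rfl
  | cons a l ih =>
    intro h
    cases l with
    | nil => rfl
    | cons b l' =>
      show W a b + cost W (b :: l') = W' a b + cost W' (b :: l')
      rw [h a b (by simp) (by simp),
        ih (fun p q hp hq => h p q (List.mem_cons_of_mem _ hp) (List.mem_cons_of_mem _ hq))]

lemma lip1 (n X : ℕ) (hn : 1 ≤ n) (hX : 2 ≤ X)
    (B : ℕ → ℕ → ℕ) (hB : ∀ i j, 1 ≤ i → i ≤ n → 1 ≤ j → j ≤ n → B i j ≤ X)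
    (A : ℕ → ℕ) (hA : ∀ k, 1 ≤ k → k ≤ n → A k ≤ X)
    (p q : Option GV) :
    ((X^2 * psi1 n p + del1 B A p : ℕ) : ℕ∞) ≤
      hW6 n X B A p q + ((X^2 * psi1 n q + del1 B A q : ℕ) : ℕ∞) := by
  have hss : ∀ p q : GV, hW6 n X B A (some p) (some q) = wgridW n n X B p q := by
    intro p q; cases p <;> cases q <;> rfl
  match p, q with
  | some p, some q =>
    rw [hss, wgridW, symW, ← min_add_add_right]
    exact le_min (dir1 n X hn hX B hB A hA p q).1 (dir1 n X hn hX B hB A hA q p).2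
  | some (GV.b k), none =>
    show _ ≤ (if 1 ≤ k ∧ k ≤ n then (A k : ℕ∞) else ⊤) + _
    split_ifs with h
    · simp [psi1, del1]
    · simp [top_add, le_top]
  | some (GV.a _), none => simp [hW6, top_add, le_top]
  | some (GV.u _ _), none => simp [hW6, top_add, le_top]
  | some (GV.v _ _), none => simp [hW6, top_add, le_top]
  | some (GV.w _ _), none => simp [hW6, top_add, le_top]
  | some (GV.x _ _), none => simp [hW6, top_add, le_top]
  | none, _ => simp [psi1, del1]

lemma lip2 (n X : ℕ) (hn : 1 ≤ n) (hX : 2 ≤ X)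
    (B : ℕ → ℕ → ℕ) (A : ℕ → ℕ)
    (p q : Option GV) :
    ((X^2 * psi2 n p : ℕ) : ℕ∞) ≤
      (if p = some (GV.b 1) ∨ q = some (GV.b 1) then ⊤ else hW6 n X B A p q) +
        ((X^2 * psi2 n q : ℕ) : ℕ∞) := by
  have hss : ∀ p q : GV, hW6 n X B A (some p) (some q) = wgridW n n X B p q := by
    intro p q; cases p <;> cases q <;> rfl
  by_cases hb : p = some (GV.b 1) ∨ q = some (GV.b 1)
  · rw [if_pos hb]; simp [top_add, le_top]
  rw [if_neg hb]
  push_neg at hb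
  obtain ⟨hp, hq⟩ := hb
  match p, q with
  | some p, some q =>
    rw [hss, wgridW, symW, ← min_add_add_right]
    refine le_min (dir2 n X hn hX B p q ?_).1 (dir2 n X hn hX B q p ?_).2
    · intro _ h; exact hq (by rw [h])
    · intro _ h; exact hp (by rw [h])
  | some (GV.b k), none =>
    show _ ≤ (if 1 ≤ k ∧ k ≤ n then (A k : ℕ∞) else ⊤) + _
    split_ifs with h
    · simp [psi2]
    · simp [top_add, le_top]
  | some (GV.a _), none => simp [hW6, top_add, le_top]
  | some (GV.u _ _), none => simp [hW6, top_add, le_top]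
  | some (GV.v _ _), none => simp [hW6, top_add, le_top]
  | some (GV.w _ _), none => simp [hW6, top_add, le_top]
  | some (GV.x _ _), none => simp [hW6, top_add, le_top]
  | none, _ => simp [psi2]

def wtail (n : ℕ) : ℕ → List (Option GV)
  | 0 => [some (GV.b 1), none]
  | (k+1) => some (GV.u 1 (n-k)) :: some (GV.w 1 (n-k)) :: wtail n k

lemma getLast?_cons_of {α : Type} (x y : α) (l : List α) (h : l.getLast? = some y) :
    (x :: l).getLast? = some y := by
  cases l with
  | nil => simp at h
  | cons a l' => rwa [List.getLast?_cons_cons]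

lemma wtail_last (n : ℕ) : ∀ k, (wtail n k).getLast? = some none := by
  intro k
  induction k with
  | zero => rfl
  | succ k ih =>
    exact getLast?_cons_of _ _ _ (getLast?_cons_of _ _ _ ih)



lemma castP (X b : ℕ) : (X:ℕ∞)^2 + ((b:ℕ):ℕ∞) = ((X^2 + b : ℕ):ℕ∞) := by
  push_cast; ring

lemma wtail_cost (n X : ℕ) (hn : 1 ≤ n) (hX : 2 ≤ X) (B : ℕ → ℕ → ℕ) (A : ℕ → ℕ) :
    ∀ k, k + 1 ≤ n → cost (hW6 n X B A) (some (GV.w 1 (n-k)) :: wtail n k) =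
      ((X^2*(2*n*(k+1) - 2) + A 1 : ℕ) : ℕ∞) := by
  have hss : ∀ p q : GV, hW6 n X B A (some p) (some q) = wgridW n n X B p q := by
    intro p q; cases p <;> cases q <;> rfl
  have htop : (X:ℕ∞)^2 * ⊤ = ⊤ := ENat.mul_top (by positivity)
  intro k
  induction k with
  | zero =>
    intro _
    have e1 : hW6 n X B A (some (GV.w 1 (n-0))) (some (GV.b 1)) = (X:ℕ∞)^2 * ((2*n-2 : ℕ) : ℕ∞) := by
      rw [hss, wgridW, symW]
      simp [dirWt, dirW, htop, hn]
    have e2 : hW6 n X B A (some (GV.b 1)) none = ((A 1 : ℕ) : ℕ∞) := by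
      simp [hW6, hn]
    show hW6 n X B A (some (GV.w 1 (n-0))) (some (GV.b 1)) +
      (hW6 n X B A (some (GV.b 1)) none + 0) = _
    rw [e1, e2, add_zero, castw]
    rw [show (2*n*(0+1) : ℕ) = 2*n from by ring]
  | succ k ih =>
    intro h
    have e1 : hW6 n X B A (some (GV.w 1 (n-(k+1)))) (some (GV.u 1 (n-k)))
        = (X:ℕ∞)^2 * ((2*n-2 : ℕ) : ℕ∞) := by
      rw [hss, wgridW, symW]
      simp [dirWt, dirW, htop, show n-k = n-(k+1)+1 by omega, show ¬(n-(k+1) = n-k) by omega,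
        show (1:ℕ) ≤ n by omega, show 1 ≤ n-(k+1) by omega, show n-(k+1)+1 ≤ n by omega]
    have e2 : hW6 n X B A (some (GV.u 1 (n-k))) (some (GV.w 1 (n-k))) = (X:ℕ∞)^2 * 2 := by
      rw [hss, wgridW, symW]
      simp [dirWt, dirW, htop, show ¬(n-k = n-k+1) by omega,
        show (1:ℕ) ≤ n by omega, show 1 ≤ n-k by omega, show n-k ≤ n by omega]
    show hW6 n X B A (some (GV.w 1 (n-(k+1)))) (some (GV.u 1 (n-k))) +
      (hW6 n X B A (some (GV.u 1 (n-k))) (some (GV.w 1 (n-k))) +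
        cost (hW6 n X B A) (some (GV.w 1 (n-k)) :: wtail n k)) = _
    rw [e1, e2, ih (by omega), cast2, castw]
    refine congrArg _ ?_
    have hm : 2*n*((k+1)+1) = 2*n*(k+1) + 2*n := Nat.mul_succ _ _
    have hb : 2*n ≤ 2*n*(k+1) := Nat.le_mul_of_pos_right _ (by omega)
    have he : 2*n*(k+1+1)-2 = (2*n-2) + 2 + (2*n*(k+1)-2) := by omega
    have hd : X^2*((2*n-2) + 2 + (2*n*(k+1)-2))
        = X^2*(2*n-2) + X^2*2 + X^2*(2*n*(k+1)-2) := by ring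
    rw [he]
    omega

lemma walk_cost (n X : ℕ) (hn : 1 ≤ n) (hX : 2 ≤ X) (B : ℕ → ℕ → ℕ) (A : ℕ → ℕ)
    (k : ℕ) (h : k + 1 ≤ n) :
    cost (hW6 n X B A) (some (GV.a (n-k)) :: some (GV.v 1 (n-k)) :: some (GV.x 1 (n-k)) ::
        some (GV.w 1 (n-k)) :: wtail n k) =
      ((X^2*(2*n*(k+1)+2*(n-k)-1) + (B 1 (n-k) + A 1) : ℕ) : ℕ∞) := by
  have hss : ∀ p q : GV, hW6 n X B A (some p) (some q) = wgridW n n X B p q := by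
    intro p q; cases p <;> cases q <;> rfl
  have htop : (X:ℕ∞)^2 * ⊤ = ⊤ := ENat.mul_top (by positivity)
  have e1 : hW6 n X B A (some (GV.a (n-k))) (some (GV.v 1 (n-k)))
      = (X:ℕ∞)^2 * ((2*(n-k)-1 : ℕ) : ℕ∞) := by
    rw [hss, wgridW, symW]
    simp [dirWt, dirW, htop, show 1 ≤ n-k by omega, show n-k ≤ n by omega]
  have e2 : hW6 n X B A (some (GV.v 1 (n-k))) (some (GV.x 1 (n-k)))
      = (X:ℕ∞)^2 + ((B 1 (n-k) : ℕ) : ℕ∞) := by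
    rw [hss, wgridW, symW]
    simp [dirWt, dirW, htop, show (1:ℕ) ≤ n by omega, show 1 ≤ n-k by omega,
      show n-k ≤ n by omega]
  have e3 : hW6 n X B A (some (GV.x 1 (n-k))) (some (GV.w 1 (n-k))) = (X:ℕ∞)^2 := by
    rw [hss, wgridW, symW]
    simp [dirWt, dirW, htop, show (1:ℕ) ≤ n by omega, show 1 ≤ n-k by omega,
      show n-k ≤ n by omega]
  show hW6 n X B A (some (GV.a (n-k))) (some (GV.v 1 (n-k))) +
    (hW6 n X B A (some (GV.v 1 (n-k))) (some (GV.x 1 (n-k))) +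
      (hW6 n X B A (some (GV.x 1 (n-k))) (some (GV.w 1 (n-k))) +
        cost (hW6 n X B A) (some (GV.w 1 (n-k)) :: wtail n k))) = _
  rw [e1, e2, e3, wtail_cost n X hn hX B A k h, castP, castP, ← Nat.cast_add, castw]
  refine congrArg _ ?_
  have hb : 2*n ≤ 2*n*(k+1) := Nat.le_mul_of_pos_right _ (by omega)
  have he : 2*n*(k+1)+2*(n-k)-1 = (2*(n-k)-1) + 1 + 1 + (2*n*(k+1)-2) := by omega
  have hd : X^2*((2*(n-k)-1) + 1 + 1 + (2*n*(k+1)-2))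
      = X^2*(2*(n-k)-1) + X^2*1 + X^2*1 + X^2*(2*n*(k+1)-2) := by ring
  rw [he]
  omega

end GridProof

/-- the faulty first attempt.  In `H`, the shortest-path distance from
`a j` to `t` is `X²·(2n·(n−j+1) + 2j − 1) + B 1 j + A 1`: the dominant term is minimized
at `k = 1`, and every shortest `a j`–`t` walk passes through `b 1`, regardless of the
values of `A` and `B`. -/
theorem attempt_dist_a_t (n X : ℕ) (hn : 1 ≤ n) (hX : 2 ≤ X)
    (B : ℕ → ℕ → ℕ) (hB : ∀ i j, 1 ≤ i → i ≤ n → 1 ≤ j → j ≤ n → B i j ≤ X)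
    (A : ℕ → ℕ) (hA : ∀ k, 1 ≤ k → k ≤ n → A k ≤ X)
    (j : ℕ) (hj1 : 1 ≤ j) (hjn : j ≤ n) :
    gdist (hW6 n X B A) (some (GV.a j)) none =
        ((X ^ 2 * (2 * n * (n - j + 1) + 2 * j - 1) + B 1 j + A 1 : ℕ) : ℕ∞) ∧
      ∀ l : List (Option GV), l.head? = some (some (GV.a j)) → l.getLast? = some none →
        cost (hW6 n X B A) l = gdist (hW6 n X B A) (some (GV.a j)) none →
        some (GV.b 1) ∈ l := by
  have h2X : 2*X ≤ X^2 := by nlinarith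
  -- upper bound
  have hw := walk_cost n X hn hX B A (n-j) (by omega)
  rw [show n - (n-j) = j from by omega] at hw
  rw [show (X^2*(2*n*(n-j+1)+2*j-1) + (B 1 j + A 1) : ℕ)
      = X^2*(2*n*(n-j+1)+2*j-1) + B 1 j + A 1 from by omega] at hw
  have hL2 : (some (GV.a j) :: some (GV.v 1 j) :: some (GV.x 1 j) ::
      some (GV.w 1 j) :: wtail n (n-j)).getLast? = some none :=
    getLast?_cons_of _ _ _ (getLast?_cons_of _ _ _ (getLast?_cons_of _ _ _ (getLast?_cons_of _ _ _ (wtail_last n (n-j)))))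
  have hub : gdist (hW6 n X B A) (some (GV.a j)) none ≤
      ((X^2*(2*n*(n-j+1)+2*j-1) + B 1 j + A 1 : ℕ) : ℕ∞) :=
    sInf_le ⟨some (GV.a j) :: some (GV.v 1 j) :: some (GV.x 1 j) :: some (GV.w 1 j) :: wtail n (n-j), rfl, hL2, hw⟩
  -- lower bound
  have hlb : ((X^2*(2*n*(n-j+1)+2*j-1) + B 1 j + A 1 : ℕ) : ℕ∞) ≤
      gdist (hW6 n X B A) (some (GV.a j)) none := by
    refine le_sInf ?_
    rintro c ⟨l, h1, h2, rfl⟩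
    have hp := phi_le_cost (hW6 n X B A) (fun p => X^2 * psi1 n p + del1 B A p)
      (lip1 n X hn hX B hB A hA) l _ _ h1 h2
    simp only [psi1, del1, Nat.mul_zero, Nat.add_zero, Nat.cast_zero, add_zero] at hp
    refine le_trans (le_of_eq (congrArg _ (by omega))) hp
  have hdist : gdist (hW6 n X B A) (some (GV.a j)) none =
      ((X^2*(2*n*(n-j+1)+2*j-1) + B 1 j + A 1 : ℕ) : ℕ∞) := le_antisymm hub hlb
  refine ⟨hdist, ?_⟩
  intro l h1 h2 h3
  rw [hdist] at h3
  by_contra hb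
  have hcc : cost (fun p q => if p = some (GV.b 1) ∨ q = some (GV.b 1) then ⊤
      else hW6 n X B A p q) l = cost (hW6 n X B A) l := by
    refine cost_eqW _ _ l ?_
    intro p q hp hq
    rw [if_neg]
    rintro (rfl | rfl)
    · exact hb hp
    · exact hb hq
  have h5 := phi_le_cost _ (fun p => X^2 * psi2 n p) (lip2 n X hn hX B A) l _ _ h1 h2
  rw [hcc, h3] at h5
  simp only [psi2, Nat.mul_zero, Nat.cast_zero, add_zero] at h5
  have h6 := Nat.cast_le.mp h5
  have hm : X^2*(2*n*(n-j+1)+4*j-1) = X^2*(2*n*(n-j+1)+2*j-1) + X^2*(2*j) := by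
    rw [show 2*n*(n-j+1)+4*j-1 = (2*n*(n-j+1)+2*j-1) + 2*j from by omega, Nat.mul_add]
  have h2j : X^2*2 ≤ X^2*(2*j) := Nat.mul_le_mul_left _ (by omega)
  have hBb : B 1 j ≤ X := hB 1 j le_rfl hn hj1 hjn
  have hAb : A 1 ≤ X := hA 1 le_rfl hn
  omega
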